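/- If f is a cusp form for Γ_S of weight k, i.e. holomorphic on the orthogonal half-space H_S, invariant under the weight-k slash action of Γ_S, and such that w ↦ S₀[Im w]^{k/2}|f(w)| is bounded on H_S, and f satisfies f|_k Γ_S R Γ_S = ρ f for some R ∈ Δ_S(r) with eigenvalue ρ ∈ ℂ, then |ρ| ≤ r^{-k/2} ρ₀ where ρ₀ = #(Γ_S\Γ_S R Γ_S). (Abstract version: if g := Σ_{j=1}^{ρ₀} f|_k M_j = ρ f with each M_j ∈ (1/√r)·SO⁺(S₁;ℝ) scaled integrally, and the Petersson norm-type sup S₀[Im w]^{k/2}|f(w)| is finite and attained, then |ρ| ≤ r^{-k/2}ρ₀.) -/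

import Mathlib

open Matrix Complex

abbrev Idx (n : ℕ) := Fin 1 ⊕ Fin n ⊕ Fin 1
abbrev Idx1 (n : ℕ) := Fin 1 ⊕ Idx n ⊕ Fin 1

/-- `S₀ = [[0,0,1],[0,-S,0],[1,0,0]]`. -/
def S0Mat (n : ℕ) (S : Matrix (Fin n) (Fin n) ℝ) : Matrix (Idx n) (Idx n) ℝ :=
  fun i j =>
    match i, j with
    | Sum.inl _, Sum.inr (Sum.inr _) => 1
    | Sum.inr (Sum.inr _), Sum.inl _ => 1
    | Sum.inr (Sum.inl a), Sum.inr (Sum.inl b) => -S a b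
    | _, _ => 0

/-- `S₁ = [[0,0,1],[0,S₀,0],[1,0,0]]`. -/
def S1Mat (n : ℕ) (S : Matrix (Fin n) (Fin n) ℝ) : Matrix (Idx1 n) (Idx1 n) ℝ :=
  fun i j =>
    match i, j with
    | Sum.inl _, Sum.inr (Sum.inr _) => 1
    | Sum.inr (Sum.inr _), Sum.inl _ => 1
    | Sum.inr (Sum.inl a), Sum.inr (Sum.inl b) => S0Mat n S a b
    | _, _ => 0

/-- `S₀[v] = vᵀS₀v` for real vectors. -/
def quadR (n : ℕ) (S : Matrix (Fin n) (Fin n) ℝ) (v : Idx n → ℝ) : ℝ :=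
  v ⬝ᵥ (S0Mat n S).mulVec v

/-- `S₀[w] = wᵀS₀w`, bilinear extension to `ℂ^{n+2}`. -/
noncomputable def quadC (n : ℕ) (S : Matrix (Fin n) (Fin n) ℝ) (w : Idx n → ℂ) : ℂ :=
  w ⬝ᵥ ((S0Mat n S).map (Complex.ofReal)).mulVec w

/-- The orthogonal half-space `H_S = {w = (τ,z,τ')ᵀ : S₀[Im w] > 0, τ, τ' ∈ ℍ}`. -/
def orthHS (n : ℕ) (S : Matrix (Fin n) (Fin n) ℝ) : Set (Idx n → ℂ) :=
  {w | 0 < quadR n S (fun i => (w i).im) ∧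
       0 < (w (Sum.inl 0)).im ∧ 0 < (w (Sum.inr (Sum.inr 0))).im}

/-- `M{w} = -(γ/2)S₀[w] + dᵀw + δ` for `M = [[α,aᵀ,β],[b,K,c],[γ,dᵀ,δ]]`. -/
noncomputable def braceM (n : ℕ) (S : Matrix (Fin n) (Fin n) ℝ)
    (M : Matrix (Idx1 n) (Idx1 n) ℝ) (w : Idx n → ℂ) : ℂ :=
  -((M (Sum.inr (Sum.inr 0)) (Sum.inl 0) : ℂ) / 2) * quadC n S w
    + (fun j => (M (Sum.inr (Sum.inr 0)) (Sum.inr (Sum.inl j)) : ℂ)) ⬝ᵥ w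
    + (M (Sum.inr (Sum.inr 0)) (Sum.inr (Sum.inr 0)) : ℂ)

/-- `M⟨w⟩ = (-(1/2)S₀[w]·b + Kw + c)·M{w}⁻¹`. -/
noncomputable def angleM (n : ℕ) (S : Matrix (Fin n) (Fin n) ℝ)
    (M : Matrix (Idx1 n) (Idx1 n) ℝ) (w : Idx n → ℂ) : Idx n → ℂ :=
  fun i =>
    (-(1 / 2) * quadC n S w * (M (Sum.inr (Sum.inl i)) (Sum.inl 0) : ℂ)
      + (fun j => (M (Sum.inr (Sum.inl i)) (Sum.inr (Sum.inl j)) : ℂ)) ⬝ᵥ w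
      + (M (Sum.inr (Sum.inl i)) (Sum.inr (Sum.inr 0)) : ℂ)) * (braceM n S M w)⁻¹


namespace Stmt14

variable (n : ℕ) (S : Matrix (Fin n) (Fin n) ℝ)

noncomputable def S0C : Matrix (Idx n) (Idx n) ℂ := (S0Mat n S).map (Complex.ofReal)
noncomputable def S1C : Matrix (Idx1 n) (Idx1 n) ℂ := (S1Mat n S).map (Complex.ofReal)

def vec3 (a : ℂ) (w : Idx n → ℂ) (b : ℂ) : Idx1 n → ℂ :=
  Sum.elim (fun _ => a) (Sum.elim w (fun _ => b))

noncomputable def vC (w : Idx n → ℂ) : Idx1 n → ℂ :=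
  vec3 n (-(quadC n S w) / 2) w 1

lemma pair_vec3 (a b a' b' : ℂ) (w u : Idx n → ℂ) :
    vec3 n a w b ⬝ᵥ (S1C n S).mulVec (vec3 n a' u b')
      = a * b' + b * a' + w ⬝ᵥ (S0C n S).mulVec u := by
  simp only [dotProduct, mulVec, S1C, S0C, Matrix.map_apply, vec3,
    Fintype.sum_sum_type, Sum.elim_inl, Sum.elim_inr, S1Mat]
  simp [Finset.mul_sum]
  ring

lemma quadC_eq (w : Idx n → ℂ) : quadC n S w = w ⬝ᵥ (S0C n S).mulVec w := rfl

lemma quadC_conj (w : Idx n → ℂ) :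
    (starRingEnd ℂ) (quadC n S w) = quadC n S (fun i => (starRingEnd ℂ) (w i)) := by
  simp [quadC, dotProduct, mulVec, map_sum, _root_.map_mul, Matrix.map_apply, Complex.conj_ofReal]

lemma quadR_cast (v : Idx n → ℝ) :
    ((quadR n S v : ℝ) : ℂ) = quadC n S (fun i => (v i : ℂ)) := by
  simp [quadR, quadC, dotProduct, mulVec, Matrix.map_apply]

lemma S0C_symm (hsym : S.IsSymm) : (S0C n S)ᵀ = S0C n S := by
  ext i j
  rcases i with a | b | c <;> rcases j with a' | b' | c' <;>
    simp [S0C, Matrix.transpose_apply, Matrix.map_apply, S0Mat]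
  have := congrFun (congrFun hsym b') b
  simp only [Matrix.transpose_apply] at this
  rw [this]

lemma bilin_symm (hsym : S.IsSymm) (w u : Idx n → ℂ) :
    w ⬝ᵥ (S0C n S).mulVec u = u ⬝ᵥ (S0C n S).mulVec w := by
  rw [Matrix.dotProduct_mulVec]
  conv_lhs => rw [← S0C_symm n S hsym]
  rw [Matrix.vecMul_transpose, dotProduct_comm]

lemma quadC_smul (c : ℂ) (v : Idx n → ℂ) : quadC n S (c • v) = c * c * quadC n S v := by
  simp only [quadC, Matrix.mulVec_smul, dotProduct_smul, smul_dotProduct, smul_eq_mul]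
  ring

lemma quadC_sub (x y : Idx n → ℂ) : quadC n S (x - y)
    = quadC n S x - x ⬝ᵥ (S0C n S).mulVec y - y ⬝ᵥ (S0C n S).mulVec x + quadC n S y := by
  simp only [quadC, S0C, Matrix.mulVec_sub, dotProduct_sub, sub_dotProduct]
  ring

/-- the key hermitian identity: `v(w)ᵀ S₁ conj(v(w)) = 2 S₀[Im w]`. -/
lemma herm_eq (hsym : S.IsSymm) (w : Idx n → ℂ) :
    vC n S w ⬝ᵥ (S1C n S).mulVec (fun i => (starRingEnd ℂ) (vC n S w i))
      = 2 * ((quadR n S fun i => (w i).im : ℝ) : ℂ) := by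
  have hconj : (fun i => (starRingEnd ℂ) (vC n S w i))
      = vec3 n ((starRingEnd ℂ) (-(quadC n S w) / 2)) (fun i => (starRingEnd ℂ) (w i)) 1 := by
    funext i
    cases i with
    | inl a => rfl
    | inr b => cases b with
      | inl c => rfl
      | inr d => simp [vC, vec3]
  rw [hconj, vC, pair_vec3]
  -- now express quadR (Im w) via the bilinear form
  have him : (fun i => ((w i).im : ℂ)) = fun i => (2 * Complex.I)⁻¹ * (w i - (starRingEnd ℂ) (w i)) := by
    funext i
    rw [Complex.sub_conj]
    push_cast
    field_simp
  have hsmul : (fun i => (2 * Complex.I)⁻¹ * (w i - (starRingEnd ℂ) (w i)))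
      = (2 * Complex.I)⁻¹ • (w - fun i => (starRingEnd ℂ) (w i)) := rfl
  rw [quadR_cast, him, hsmul, quadC_smul, quadC_sub,
    bilin_symm n S hsym (fun i => (starRingEnd ℂ) (w i)) w]
  simp only [map_div₀, map_neg]
  rw [quadC_conj]
  have h4 : (2 * Complex.I) * (2 * Complex.I) = -4 := by
    linear_combination 4 * Complex.I_mul_I
  have h2I : (2 * Complex.I) ≠ 0 := by simp [Complex.I_ne_zero]
  rw [quadC_eq, quadC_eq]
  field_simp
  simp only [Complex.conj_ofNat]
  linear_combination (-2*(w ⬝ᵥ (S0C n S).mulVec w)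
    - 2*((fun i => (starRingEnd ℂ) (w i)) ⬝ᵥ (S0C n S).mulVec (fun i => (starRingEnd ℂ) (w i)))
    + 4*(w ⬝ᵥ (S0C n S).mulVec (fun i => (starRingEnd ℂ) (w i)))) * h4
    + (6*(w ⬝ᵥ (S0C n S).mulVec w) + 6*((fun i => (starRingEnd ℂ) (w i)) ⬝ᵥ (S0C n S).mulVec (fun i => (starRingEnd ℂ) (w i))) - 12*(w ⬝ᵥ (S0C n S).mulVec (fun i => (starRingEnd ℂ) (w i)))) * Complex.I_mul_I

lemma null_eq (w : Idx n → ℂ) : vC n S w ⬝ᵥ (S1C n S).mulVec (vC n S w) = 0 := by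
  rw [vC, pair_vec3, ← quadC_eq]
  ring

lemma conj_mulVec (M : Matrix (Idx1 n) (Idx1 n) ℝ) (x : Idx1 n → ℂ) :
    (fun i => (starRingEnd ℂ) ((M.map (Complex.ofReal)).mulVec x i))
      = (M.map (Complex.ofReal)).mulVec (fun i => (starRingEnd ℂ) (x i)) := by
  funext i
  simp [mulVec, dotProduct, map_sum, _root_.map_mul, Matrix.map_apply, Complex.conj_ofReal]

lemma MTSM (r : ℕ) (hr : 1 ≤ r) (M : Matrix (Idx1 n) (Idx1 n) ℝ)
    (horth : ((Real.sqrt r)⁻¹ • M)ᵀ * S1Mat n S * ((Real.sqrt r)⁻¹ • M) = S1Mat n S) :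
    (M.map (Complex.ofReal))ᵀ * S1C n S * (M.map (Complex.ofReal))
      = (r : ℂ) • S1C n S := by
  have hr0 : (0:ℝ) < r := by exact_mod_cast hr
  have hR : Mᵀ * S1Mat n S * M = (r:ℝ) • S1Mat n S := by
    have h1 : ((Real.sqrt r)⁻¹ • M)ᵀ * S1Mat n S * ((Real.sqrt r)⁻¹ • M)
        = ((Real.sqrt r)⁻¹ * (Real.sqrt r)⁻¹) • (Mᵀ * S1Mat n S * M) := by
      rw [Matrix.transpose_smul, Matrix.smul_mul, Matrix.smul_mul, Matrix.mul_smul, smul_smul]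
    have h2 : (Real.sqrt r)⁻¹ * (Real.sqrt r)⁻¹ = (r:ℝ)⁻¹ := by
      rw [← mul_inv, Real.mul_self_sqrt hr0.le]
    rw [h1, h2] at horth
    have := congrArg (fun A => (r:ℝ) • A) horth
    simpa [smul_smul, mul_inv_cancel₀ hr0.ne'] using this
  ext i j
  have := congrFun (congrFun hR i) j
  simp only [Matrix.mul_apply, Matrix.transpose_apply, Matrix.map_apply, Matrix.smul_apply,
    smul_eq_mul, S1C] at this ⊢
  exact_mod_cast this

lemma orth_pair (r : ℕ) (MC : Matrix (Idx1 n) (Idx1 n) ℂ)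
    (hM : MCᵀ * S1C n S * MC = (r : ℂ) • S1C n S) (x y : Idx1 n → ℂ) :
    (MC.mulVec x) ⬝ᵥ (S1C n S).mulVec (MC.mulVec y) = (r:ℂ) * (x ⬝ᵥ (S1C n S).mulVec y) := by
  rw [Matrix.mulVec_mulVec, ← Matrix.vecMul_transpose, Matrix.dotProduct_mulVec,
    Matrix.vecMul_vecMul, ← Matrix.mul_assoc, hM]
  rw [← Matrix.dotProduct_mulVec, Matrix.smul_mulVec, dotProduct_smul, smul_eq_mul]

lemma brace_ne (M : Matrix (Idx1 n) (Idx1 n) ℝ) (w : Idx n → ℂ)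
    (h : angleM n S M w ∈ orthHS n S) : braceM n S M w ≠ 0 := by
  intro h0
  have h1 := h.2.1
  have : angleM n S M w (Sum.inl 0) = 0 := by simp [angleM, h0]
  rw [this] at h1
  simp at h1

lemma mulVec_last (M : Matrix (Idx1 n) (Idx1 n) ℝ) (w : Idx n → ℂ) :
    (M.map (Complex.ofReal)).mulVec (vC n S w) (Sum.inr (Sum.inr 0)) = braceM n S M w := by
  simp only [mulVec, dotProduct, Fintype.sum_sum_type, vC, vec3, Sum.elim_inl, Sum.elim_inr,
    Matrix.map_apply, braceM, Finset.univ_unique, Finset.sum_singleton]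
  norm_num
  ring

lemma mulVec_mid (M : Matrix (Idx1 n) (Idx1 n) ℝ) (w : Idx n → ℂ) (i : Idx n)
    (hb : braceM n S M w ≠ 0) :
    (M.map (Complex.ofReal)).mulVec (vC n S w) (Sum.inr (Sum.inl i))
      = braceM n S M w * angleM n S M w i := by
  rw [angleM]
  rw [mul_comm (braceM n S M w), mul_assoc, inv_mul_cancel₀ hb, mul_one]
  simp only [mulVec, dotProduct, Fintype.sum_sum_type, vC, vec3, Sum.elim_inl, Sum.elim_inr,
    Matrix.map_apply, Finset.univ_unique, Finset.sum_singleton]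
  norm_num
  ring

lemma transform (hsym : S.IsSymm) (r : ℕ) (hr : 1 ≤ r) (M : Matrix (Idx1 n) (Idx1 n) ℝ)
    (horth : ((Real.sqrt r)⁻¹ • M)ᵀ * S1Mat n S * ((Real.sqrt r)⁻¹ • M) = S1Mat n S)
    (w : Idx n → ℂ) (hb : braceM n S M w ≠ 0) :
    (‖braceM n S M w‖)^2 * quadR n S (fun i => ((angleM n S M w) i).im)
      = r * quadR n S (fun i => (w i).im) := by
  set MC := M.map (Complex.ofReal) with hMC
  set b := braceM n S M w with hbdef
  set w' := angleM n S M w with hw'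
  set u := MC.mulVec (vC n S w) with hu
  have hM := MTSM n S r hr M horth
  have hlast : u (Sum.inr (Sum.inr 0)) = b := mulVec_last n S M w
  have hmid : ∀ i, u (Sum.inr (Sum.inl i)) = b * w' i := fun i => mulVec_mid n S M w i hb
  have hvec : u = vec3 n (u (Sum.inl 0)) (fun i => b * w' i) b := by
    funext i
    rcases i with a | c | a
    · rw [Subsingleton.elim a 0]; rfl
    · exact hmid c
    · rw [Subsingleton.elim a 0]; exact hlast
  have hnull : u ⬝ᵥ (S1C n S).mulVec u = 0 := by
    rw [hu, orth_pair n S r MC hM, null_eq, mul_zero]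
  rw [hvec, pair_vec3] at hnull
  have hquad : (fun i => b * w' i) ⬝ᵥ (S0C n S).mulVec (fun i => b * w' i)
      = b * b * quadC n S w' := by
    have : (fun i => b * w' i) = b • w' := rfl
    rw [this, ← quadC_eq, quadC_smul]
  rw [hquad] at hnull
  have hfirst : u (Sum.inl 0) = b * (-(quadC n S w') / 2) := by
    have h2b : (2:ℂ) * b ≠ 0 := by simpa using hb
    apply mul_left_cancel₀ h2b
    linear_combination hnull
  have huv : u = b • vC n S w' := by
    rw [hvec, hfirst]
    funext i
    rcases i with a | c | a <;> simp [vec3, vC, smul_eq_mul]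
  have hherm : u ⬝ᵥ (S1C n S).mulVec (fun i => (starRingEnd ℂ) (u i))
      = (r:ℂ) * (2 * ((quadR n S fun i => (w i).im : ℝ) : ℂ)) := by
    rw [hu, conj_mulVec, orth_pair n S r MC hM, herm_eq n S hsym]
  have hherm2 : u ⬝ᵥ (S1C n S).mulVec (fun i => (starRingEnd ℂ) (u i))
      = ((‖b‖)^2 : ℝ) * (2 * ((quadR n S fun i => (w' i).im : ℝ) : ℂ)) := by
    rw [huv]
    have hc : (fun i => (starRingEnd ℂ) ((b • vC n S w') i))
        = (starRingEnd ℂ) b • (fun i => (starRingEnd ℂ) (vC n S w' i)) := by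
      funext i; simp [smul_eq_mul]
    rw [hc, Matrix.mulVec_smul, dotProduct_smul, smul_dotProduct, herm_eq n S hsym w',
      smul_eq_mul, smul_eq_mul]
    rw [show ((‖b‖)^2 : ℝ) = (Complex.normSq b : ℝ) from by rw [Complex.sq_norm]]
    rw [← Complex.mul_conj]
    ring
  rw [hherm] at hherm2
  have := hherm2.symm
  have h2 : (((‖b‖)^2 * quadR n S (fun i => ((w' i)).im) : ℝ) : ℂ)
      = ((r * quadR n S (fun i => (w i).im) : ℝ) : ℂ) := by
    push_cast
    push_cast at this
    linear_combination this / 2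
  exact_mod_cast h2

end Stmt14

open Stmt14

/-- Lemma 6 (abstract form): if `f ≢ 0` is a weight-`k` cusp form whose Petersson-type
weight function `S₀[Im w]^{k/2}|f(w)|` is bounded on `H_S` with its supremum attained,
and `Σ_{j} f|_k M_j = ρ·f` for the `ρ₀` right-coset representatives `M_j ∈ Δ_S(r)`
(integral matrices with `r^{-1/2}M_j ∈ SO⁺(S₁;ℝ)`), then `|ρ| ≤ r^{-k/2}·ρ₀`. -/
theorem stmt_14 (n k : ℕ) (S : Matrix (Fin n) (Fin n) ℝ) (hsym : S.IsSymm)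
    (hpos : S.PosDef) (r ρ₀ : ℕ) (hr : 1 ≤ r)
    (f : (Idx n → ℂ) → ℂ) (hol : DifferentiableOn ℂ f (orthHS n S))
    (M : Fin ρ₀ → Matrix (Idx1 n) (Idx1 n) ℝ)
    (hint : ∀ j, ∃ A : Matrix (Idx1 n) (Idx1 n) ℤ, M j = A.map (Int.cast : ℤ → ℝ))
    (horth : ∀ j, ((Real.sqrt r)⁻¹ • M j)ᵀ * S1Mat n S * ((Real.sqrt r)⁻¹ • M j)
        = S1Mat n S)
    (hdet : ∀ j, ((Real.sqrt r)⁻¹ • M j).det = 1)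
    (hplus : ∀ j, ∀ w ∈ orthHS n S, angleM n S (M j) w ∈ orthHS n S)
    (ρ : ℂ)
    (heig : ∀ w ∈ orthHS n S,
      ∑ j, f (angleM n S (M j) w) * (braceM n S (M j) w) ^ (-(k : ℤ)) = ρ * f w)
    (hatt : ∃ w₀ ∈ orthHS n S, ∀ w ∈ orthHS n S,
      (quadR n S fun i => (w i).im) ^ ((k : ℝ) / 2) * ‖f w‖
        ≤ (quadR n S fun i => (w₀ i).im) ^ ((k : ℝ) / 2) * ‖f w₀‖)
    (hne : ∃ w ∈ orthHS n S, f w ≠ 0) :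
    ‖ρ‖ ≤ (r : ℝ) ^ (-(k : ℝ) / 2) * ρ₀ := by
  obtain ⟨w₀, hw₀, hsup⟩ := hatt
  obtain ⟨w₁, hw₁, hf₁⟩ := hne
  set κ := (k : ℝ) / 2 with hκ
  have hrpos : (0:ℝ) < r := by exact_mod_cast hr
  have hQ : 0 < quadR n S (fun i => (w₀ i).im) := hw₀.1
  have hQκ : 0 < (quadR n S fun i => (w₀ i).im) ^ κ := Real.rpow_pos_of_pos hQ κ
  have hRk : 0 < (r:ℝ) ^ κ := Real.rpow_pos_of_pos hrpos κ
  have hF : 0 < ‖f w₀‖ := by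
    rcases eq_or_ne (f w₀) 0 with h | h
    · exfalso
      have h1 := hsup w₁ hw₁
      rw [h] at h1
      simp only [norm_zero, mul_zero] at h1
      have hq1 : 0 < (quadR n S fun i => (w₁ i).im) ^ κ :=
        Real.rpow_pos_of_pos hw₁.1 κ
      have habs : 0 < ‖f w₁‖ := norm_pos_iff.mpr hf₁
      nlinarith [mul_pos hq1 habs]
    · exact norm_pos_iff.mpr h
  have key : ∀ j, ‖f (angleM n S (M j) w₀) * (braceM n S (M j) w₀) ^ (-(k : ℤ))‖
      ≤ (r:ℝ) ^ (-κ) * ‖f w₀‖ := by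
    intro j
    set b := braceM n S (M j) w₀ with hbdef
    set w' := angleM n S (M j) w₀ with hw'def
    have hw' := hplus j w₀ hw₀
    have hb : b ≠ 0 := brace_ne n S (M j) w₀ hw'
    have habsb : 0 < ‖b‖ := norm_pos_iff.mpr hb
    have hBk : 0 < (‖b‖) ^ k := pow_pos habsb k
    have htr := transform n S hsym r hr (M j) (horth j) w₀ hb
    have hQ' : 0 < quadR n S (fun i => (w' i).im) := hw'.1
    have hQ'κ : 0 < (quadR n S fun i => (w' i).im) ^ κ := Real.rpow_pos_of_pos hQ' κ
    have hiden : (quadR n S fun i => (w' i).im) ^ κ * (‖b‖) ^ k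
        = (r:ℝ) ^ κ * (quadR n S fun i => (w₀ i).im) ^ κ := by
      have h1 : ((‖b‖) ^ 2 * quadR n S (fun i => (w' i).im)) ^ κ
          = ((r:ℝ) * quadR n S (fun i => (w₀ i).im)) ^ κ := by rw [htr]
      rw [Real.mul_rpow (by positivity) hQ'.le, Real.mul_rpow hrpos.le hQ.le] at h1
      have h2 : ((‖b‖) ^ 2) ^ κ = (‖b‖) ^ k := by
        rw [← Real.rpow_natCast (‖b‖) 2, ← Real.rpow_mul habsb.le]
        rw [show (2:ℕ) * κ = ((k:ℕ):ℝ) by rw [hκ]; push_cast; ring]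
        rw [Real.rpow_natCast]
      rw [h2] at h1
      linarith [h1]
    have hsupj := hsup w' hw'
    have habs : ‖f w' * b ^ (-(k : ℤ))‖
        = ‖f w'‖ * (‖b‖) ^ (-(k : ℤ)) := by
      rw [norm_mul, norm_zpow]
    rw [habs, _root_.zpow_neg, zpow_natCast]
    have hmain : ‖f w'‖ * (r:ℝ) ^ κ ≤ (‖b‖) ^ k * ‖f w₀‖ := by
      nlinarith [mul_le_mul_of_nonneg_right hsupj hBk.le, hiden, hQκ, hQ'κ,
        mul_pos hQ'κ hBk]
    rw [Real.rpow_neg hrpos.le, ← div_eq_mul_inv, inv_mul_eq_div,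
      div_le_div_iff₀ hBk hRk]
    linarith [hmain]
  have hsum := heig w₀ hw₀
  have hbound : ‖ρ‖ * ‖f w₀‖
      ≤ (ρ₀ : ℝ) * ((r:ℝ) ^ (-κ) * ‖f w₀‖) := by
    calc ‖ρ‖ * ‖f w₀‖
        = ‖∑ j, f (angleM n S (M j) w₀) * (braceM n S (M j) w₀) ^ (-(k : ℤ))‖ := by
          rw [hsum, norm_mul]
      _ ≤ ∑ j, ‖f (angleM n S (M j) w₀) * (braceM n S (M j) w₀) ^ (-(k : ℤ))‖ :=
          norm_sum_le _ _
      _ ≤ ∑ _j : Fin ρ₀, (r:ℝ) ^ (-κ) * ‖f w₀‖ :=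
          Finset.sum_le_sum (fun j _ => key j)
      _ = (ρ₀ : ℝ) * ((r:ℝ) ^ (-κ) * ‖f w₀‖) := by
          rw [Finset.sum_const, Finset.card_univ, Fintype.card_fin, nsmul_eq_mul]
  have hfinal : ‖ρ‖ ≤ (r:ℝ) ^ (-κ) * ρ₀ := by
    have := le_of_mul_le_mul_right (by linarith [hbound] :
      ‖ρ‖ * ‖f w₀‖ ≤ ((r:ℝ) ^ (-κ) * ρ₀) * ‖f w₀‖) hF
    exact this
  rw [show -(k:ℝ)/2 = -κ by rw [hκ]; ring]
  exact hfinal
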